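/- Let (p̲_k, p̄_k)_{k=1}^m be a coherent probability interval on a set of size m with Δ = S̄ + (m−2)S̲ − (m−1) < 0, and fix an index j ∈ {1,…,m}. Then there exist nonnegative numbers t_k for k ≠ j with t_k ≤ 1 − S̲ − (p̄_k − p̲_k) for each k ≠ j and Σ_{k≠j} t_k = −Δ; consequently the interval (p̲_k, q̄_k)_{k=1}^m with q̄_j = p̄_j and q̄_k = p̄_k + t_k for k ≠ j is a good coherent probability interval with the same lower bounds and with the j-th upper bound unchanged. -/
import Mathlib


open Finset

/-- A Dempster–Shafer mass function on the finite type `α`: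
nonnegative, at most one, vanishing on `∅`, and summing to one. -/
def IsMass {α : Type*} [Fintype α] [DecidableEq α] (m : Finset α → ℝ) : Prop :=
  m ∅ = 0 ∧ (∀ V : Finset α, 0 ≤ m V ∧ m V ≤ 1) ∧ (∑ V : Finset α, m V) = 1

/-- The belief function associated to a mass function: `Bel m W = ∑_{V ⊆ W} m V`. -/
def Bel {α : Type*} [Fintype α] [DecidableEq α] (m : Finset α → ℝ) (W : Finset α) : ℝ :=
  ∑ V ∈ Finset.univ.filter (fun V : Finset α => V ⊆ W), m V

/-- The plausibility function associated to a mass function: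
`Pl m W = ∑_{V ∩ W ≠ ∅} m V`. -/
def Pl {α : Type*} [Fintype α] [DecidableEq α] (m : Finset α → ℝ) (W : Finset α) : ℝ :=
  ∑ V ∈ Finset.univ.filter (fun V : Finset α => (V ∩ W).Nonempty), m V

/-- A coherent probability interval `(lo i, hi i)_{i}` on `Fin n`:
componentwise bounds `0 ≤ lo ≤ hi ≤ 1`, together with [Coh1], [Coh2], [Coh3]. -/
def IsCoherent {n : ℕ} (lo hi : Fin n → ℝ) : Prop :=
  (∀ i, 0 ≤ lo i ∧ lo i ≤ hi i ∧ hi i ≤ 1) ∧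
  (∑ i, lo i) ≤ 1 ∧ 1 ≤ (∑ i, hi i) ∧
  (∀ i, 1 - ∑ h ∈ Finset.univ.erase i, hi h ≤ lo i) ∧
  (∀ i, hi i ≤ 1 - ∑ h ∈ Finset.univ.erase i, lo h)

/-- `Δ = S̄ + (n-2)S̲ - (n-1)` for a probability interval. -/
def intervalDelta {n : ℕ} (lo hi : Fin n → ℝ) : ℝ :=
  (∑ i, hi i) + ((n : ℝ) - 2) * (∑ i, lo i) - ((n : ℝ) - 1)

/-- A *good* coherent probability interval: coherent and `Δ ≥ 0`. -/
def IsGood {n : ℕ} (lo hi : Fin n → ℝ) : Prop :=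
  IsCoherent lo hi ∧ 0 ≤ intervalDelta lo hi

/-- The standard good mass (SGM) associated to a (good coherent) probability interval:
mass `lo i` on each singleton `{a_i}`, mass `1 - hi i - ∑_{h ≠ i} lo h` on each
complement `univ ∖ {a_i}`, mass `Δ` on `univ`, and `0` on every other set. -/
def SGM {n : ℕ} (lo hi : Fin n → ℝ) (V : Finset (Fin n)) : ℝ :=
  (∑ i ∈ Finset.univ.filter (fun i : Fin n => V = {i}), lo i)
  + (∑ i ∈ Finset.univ.filter (fun i : Fin n => V = Finset.univ \ {i}),
      (1 - hi i - ∑ h ∈ Finset.univ.erase i, lo h))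
  + (if V = Finset.univ then intervalDelta lo hi else 0)

/-- Let `(lo, hi)` be a bad coherent probability interval on
`Fin m` (i.e. `Δ < 0`) and fix an index `j`. Then there are nonnegative numbers
`t k` for `k ≠ j`, each at most `1 - S̲ - (hi k - lo k)`, summing to `-Δ`, such
that enlarging the upper bounds by `t` (leaving `hi j` and all lower bounds
unchanged) yields a good coherent probability interval. -/
theorem bad_interval_fixing (m : ℕ) (lo hi : Fin m → ℝ)
    (hcoh : IsCoherent lo hi) (hbad : intervalDelta lo hi < 0) (j : Fin m) :
    ∃ t : Fin m → ℝ, t j = 0 ∧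
      (∀ k, k ≠ j → 0 ≤ t k ∧ t k ≤ 1 - (∑ h, lo h) - (hi k - lo k)) ∧
      (∑ k ∈ Finset.univ.erase j, t k) = -intervalDelta lo hi ∧
      IsGood lo (fun k => hi k + t k) := by
  obtain ⟨hbnd, hS1, hS2, hcoh2, hcoh3⟩ := hcoh
  set S := ∑ i, lo i with hSdef
  have hm2 : 2 ≤ m := by
    by_contra hlt
    push_neg at hlt
    have hm1 : 1 ≤ m := Nat.pos_of_ne_zero (by rintro rfl; exact j.elim0)
    have hm : m = 1 := by omega
    subst hm
    have : intervalDelta lo hi = hi 0 + (-1) * lo 0 := by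
      simp [intervalDelta, Fin.sum_univ_one]; ring
    have h0 := hbnd 0
    rw [this] at hbad
    linarith [h0.2.1]
  have hmR : (2 : ℝ) ≤ (m : ℝ) := by exact_mod_cast hm2
  have herase_lo : ∀ i : Fin m, ∑ h ∈ Finset.univ.erase i, lo h = S - lo i := by
    intro i; rw [Finset.sum_erase_eq_sub (Finset.mem_univ i)]
  have herase_hi : ∀ i : Fin m, ∑ h ∈ Finset.univ.erase i, hi h = (∑ i, hi i) - hi i := by
    intro i; rw [Finset.sum_erase_eq_sub (Finset.mem_univ i)]
  have hc : ∀ k, 0 ≤ 1 - S - (hi k - lo k) := by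
    intro k
    have h := hcoh3 k
    rw [herase_lo k] at h
    linarith
  set C := ∑ k ∈ Finset.univ.erase j, (1 - S - (hi k - lo k)) with hCdef
  have hcard : ((Finset.univ.erase j).card : ℝ) = (m : ℝ) - 1 := by
    rw [Finset.card_erase_of_mem (Finset.mem_univ j), Finset.card_univ, Fintype.card_fin]
    have : 1 ≤ m := le_trans one_le_two hm2
    push_cast [Nat.cast_sub this]
    ring
  have hCval : C = ((m : ℝ) - 1) * (1 - S) - ((∑ i, hi i) - hi j) + (S - lo j) := by
    rw [hCdef]
    have : ∀ k ∈ Finset.univ.erase j, (1 - S - (hi k - lo k)) = (1 - S) - hi k + lo k := by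
      intros; ring
    rw [Finset.sum_congr rfl this, Finset.sum_add_distrib, Finset.sum_sub_distrib,
      Finset.sum_const, nsmul_eq_mul, hcard, herase_hi j, herase_lo j]
  set T := -intervalDelta lo hi with hTdef
  have hTval : T = ((m : ℝ) - 1) - (∑ i, hi i) - ((m : ℝ) - 2) * S := by
    rw [hTdef, intervalDelta]; ring
  have hT0 : 0 < T := by rw [hTdef]; linarith
  have hTC : T ≤ C := by
    have := (hbnd j).2.1
    rw [hCval, hTval]; nlinarith
  have hC0 : 0 < C := lt_of_lt_of_le hT0 hTC
  set r := T / C with hrdef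
  have hr0 : 0 ≤ r := div_nonneg hT0.le hC0.le
  have hr1 : r ≤ 1 := by rw [hrdef, div_le_one hC0]; exact hTC
  refine ⟨fun k => if k = j then 0 else r * (1 - S - (hi k - lo k)), if_pos rfl, ?_, ?_, ?_⟩
  · intro k hk
    simp only [if_neg hk]
    constructor
    · exact mul_nonneg hr0 (hc k)
    · calc r * (1 - S - (hi k - lo k)) ≤ 1 * (1 - S - (hi k - lo k)) :=
            mul_le_mul_of_nonneg_right hr1 (hc k)
        _ = 1 - S - (hi k - lo k) := one_mul _
  · have : ∀ k ∈ Finset.univ.erase j,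
        (if k = j then 0 else r * (1 - S - (hi k - lo k))) = r * (1 - S - (hi k - lo k)) := by
      intro k hk
      rw [if_neg (Finset.ne_of_mem_erase hk)]
    rw [Finset.sum_congr rfl this, ← Finset.mul_sum, ← hCdef, hrdef,
      div_mul_cancel₀ _ hC0.ne']
  · -- IsGood
    have ht_nonneg : ∀ k, 0 ≤ (if k = j then 0 else r * (1 - S - (hi k - lo k))) := by
      intro k
      split
      · exact le_rfl
      · exact mul_nonneg hr0 (hc k)
    have ht_le' : ∀ k, k ≠ j →
        (if k = j then 0 else r * (1 - S - (hi k - lo k))) ≤ 1 - S - (hi k - lo k) := by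
      intro k hk
      rw [if_neg hk]
      calc r * (1 - S - (hi k - lo k)) ≤ 1 * (1 - S - (hi k - lo k)) :=
            mul_le_mul_of_nonneg_right hr1 (hc k)
        _ = 1 - S - (hi k - lo k) := one_mul _
    have hsum_t : (∑ k, (if k = j then 0 else r * (1 - S - (hi k - lo k)))) = T := by
      rw [← Finset.add_sum_erase _ _ (Finset.mem_univ j), if_pos rfl, zero_add]
      have : ∀ k ∈ Finset.univ.erase j,
          (if k = j then 0 else r * (1 - S - (hi k - lo k))) = r * (1 - S - (hi k - lo k)) := by
        intro k hk
        rw [if_neg (Finset.ne_of_mem_erase hk)]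
      rw [Finset.sum_congr rfl this, ← Finset.mul_sum, ← hCdef, hrdef,
        div_mul_cancel₀ _ hC0.ne']
    have hnewsum : (∑ k, (hi k + (if k = j then 0 else r * (1 - S - (hi k - lo k)))))
        = (∑ i, hi i) + T := by
      rw [Finset.sum_add_distrib, hsum_t]
    have hloS : ∀ i : Fin m, S - lo i ≤ S := by
      intro i
      have := (hbnd i).1
      linarith
    have hSnn : ∀ i : Fin m, lo i ≤ S := by
      intro i
      have : S - lo i = ∑ h ∈ Finset.univ.erase i, lo h := (herase_lo i).symm
      have hnn : 0 ≤ ∑ h ∈ Finset.univ.erase i, lo h :=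
        Finset.sum_nonneg fun h _ => (hbnd h).1
      linarith
    constructor
    · refine ⟨?_, hS1, ?_, ?_, ?_⟩
      · intro i
        refine ⟨(hbnd i).1, ?_, ?_⟩
        · have := (hbnd i).2.1
          have := ht_nonneg i
          dsimp only
          linarith
        · dsimp only
          by_cases hij : i = j
          · rw [if_pos hij]
            have := (hbnd i).2.2
            linarith
          · have h1 := ht_le' i hij
            have h2 := hSnn i
            linarith
      · rw [hnewsum, hTval]
        nlinarith [hS1]
      · intro i
        have h2 := hcoh2 i
        have hnn : 0 ≤ ∑ h ∈ Finset.univ.erase i,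
            (if h = j then 0 else r * (1 - S - (hi h - lo h))) :=
          Finset.sum_nonneg fun h _ => ht_nonneg h
        have : (∑ h ∈ Finset.univ.erase i,
            (hi h + (if h = j then 0 else r * (1 - S - (hi h - lo h)))))
            = (∑ h ∈ Finset.univ.erase i, hi h)
              + ∑ h ∈ Finset.univ.erase i, (if h = j then 0 else r * (1 - S - (hi h - lo h))) :=
          Finset.sum_add_distrib
        dsimp only
        rw [this]
        linarith
      · intro i
        dsimp only
        rw [herase_lo i]
        by_cases hij : i = j
        · rw [if_pos hij]
          have := hcoh3 i
          rw [herase_lo i] at this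
          linarith
        · have := ht_le' i hij
          linarith
    · have : intervalDelta lo (fun k => hi k + (if k = j then 0 else r * (1 - S - (hi k - lo k))))
          = intervalDelta lo hi + T := by
        simp only [intervalDelta]
        rw [hnewsum]
        ring
      rw [this, hTdef]
      linarith
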